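/- Let K₀ be a number field and K a quadratic field extension of K₀, with rings of integers O_{K₀} ⊆ O_K. The map sending a nonzero ideal 𝔣₀ of O_{K₀} to O_{K₀} + 𝔣₀O_K is a bijection between the set of nonzero ideals of O_{K₀} and the set of orders of K containing O_{K₀}. -/

import Mathlib

set_option linter.unusedSectionVars false
set_option maxHeartbeats 1000000

open NumberField

/-- An order in a number field `K`: a subring (equivalently, a `ℤ`-subalgebra) of `K` that is
finitely generated as a `ℤ`-module and contains a `ℚ`-basis of `K` (i.e. spans `K` over `ℚ`). -/
def IsOrder (K : Type*) [Field K] [NumberField K] (O : Subalgebra ℤ K) : Prop :=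
  (Subalgebra.toSubmodule O).FG ∧ Submodule.span ℚ (O : Set K) = ⊤

/-- The ring of integers of `K₀` viewed as a subset of `K`. -/
noncomputable def realIntegers (K₀ K : Type*) [Field K₀] [NumberField K₀] [Field K]
    [NumberField K] [Algebra K₀ K] : Set K :=
  Set.range (fun a : 𝓞 K₀ => algebraMap K₀ K (algebraMap (𝓞 K₀) K₀ a))

/-- The subset `𝓞 K₀ + 𝔣₀ 𝓞 K` of `K`: sums of an element of `𝓞 K₀` and an element of the
ideal of `𝓞 K` generated by the ideal `𝔣₀` of `𝓞 K₀`. -/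
noncomputable def ordSet (K₀ K : Type*) [Field K₀] [NumberField K₀] [Field K]
    [NumberField K] [Algebra K₀ K] (𝔣₀ : Ideal (𝓞 K₀)) : Set K :=
  {z : K | ∃ a : 𝓞 K₀, ∃ b ∈ Ideal.map (algebraMap (𝓞 K₀) (𝓞 K)) 𝔣₀,
    z = algebraMap K₀ K (algebraMap (𝓞 K₀) K₀ a) + algebraMap (𝓞 K) K b}

namespace OMB

section generic

variable {R M : Type*} [CommRing R] [IsNoetherianRing R] [AddCommGroup M] [Module R M]

lemma fg_of_le {N P : Submodule R M} (hN : N.FG) (h : P ≤ N) : P.FG := by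
  haveI := isNoetherian_of_fg_of_noetherian N hN
  have h1 : (P.comap N.subtype).FG := IsNoetherian.noetherian _
  have h2 := h1.map N.subtype
  rwa [Submodule.map_comap_subtype, inf_eq_right.mpr h] at h2

lemma map_mul_eq_smul {R A : Type*} [CommRing R] [CommRing A] [Algebra R A]
    (I : Ideal R) (N : Submodule R A) :
    Submodule.map (Algebra.linearMap R A) I * N = I • N := by
  apply le_antisymm
  · rw [Submodule.mul_le]
    rintro x ⟨i, hi, rfl⟩ y hy
    rw [Algebra.linearMap_apply, ← Algebra.smul_def]
    exact Submodule.smul_mem_smul hi hy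
  · rw [Submodule.smul_le]
    intro r hr n hn
    rw [Algebra.smul_def]
    exact Submodule.mul_mem_mul (Submodule.mem_map_of_mem hr) hn

end generic

variable (K₀ K : Type*) [Field K₀] [NumberField K₀] [Field K] [NumberField K] [Algebra K₀ K]

lemma algK₀ (a : 𝓞 K₀) : algebraMap K₀ K (algebraMap (𝓞 K₀) K₀ a) = algebraMap (𝓞 K₀) K a :=
  (IsScalarTower.algebraMap_apply _ _ _ a).symm

lemma algK (a : 𝓞 K₀) :
    algebraMap (𝓞 K) K (algebraMap (𝓞 K₀) (𝓞 K) a) = algebraMap (𝓞 K₀) K a :=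
  (IsScalarTower.algebraMap_apply _ _ _ a).symm

lemma smul_eq (b : 𝓞 K₀) (x : K) : b • x = algebraMap (𝓞 K₀) K b * x := Algebra.smul_def _ _

/-- `𝓞 K₀` inside `K` as an `𝓞 K₀`-submodule. -/
noncomputable def R0 : Submodule (𝓞 K₀) K := LinearMap.range (Algebra.linearMap (𝓞 K₀) K)

/-- `𝓞 K` inside `K` as an `𝓞 K₀`-submodule. -/
noncomputable def MOK : Submodule (𝓞 K₀) K :=
  LinearMap.range ((Algebra.linearMap (𝓞 K) K).restrictScalars (𝓞 K₀))

lemma mem_R0 {x : K} : x ∈ R0 K₀ K ↔ ∃ a : 𝓞 K₀, algebraMap (𝓞 K₀) K a = x := by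
  simp [R0, LinearMap.mem_range, Algebra.linearMap_apply]

lemma mem_MOK {x : K} : x ∈ MOK K₀ K ↔ ∃ y : 𝓞 K, algebraMap (𝓞 K) K y = x := by
  simp [MOK, LinearMap.mem_range, Algebra.linearMap_apply]

lemma realIntegers_eq : realIntegers K₀ K = (R0 K₀ K : Set K) := by
  ext x
  simp only [realIntegers, Set.mem_range, SetLike.mem_coe, mem_R0, algK₀]

lemma one_mem_R0 : (1 : K) ∈ R0 K₀ K := (mem_R0 K₀ K).2 ⟨1, map_one _⟩

lemma R0_le_MOK : R0 K₀ K ≤ MOK K₀ K := by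
  intro x hx
  obtain ⟨a, rfl⟩ := (mem_R0 K₀ K).1 hx
  exact (mem_MOK K₀ K).2 ⟨algebraMap (𝓞 K₀) (𝓞 K) a, algK K₀ K a⟩

lemma MOK_mul_mem {x y : K} (hx : x ∈ MOK K₀ K) (hy : y ∈ MOK K₀ K) : x * y ∈ MOK K₀ K := by
  obtain ⟨a, rfl⟩ := (mem_MOK K₀ K).1 hx
  obtain ⟨b, rfl⟩ := (mem_MOK K₀ K).1 hy
  exact (mem_MOK K₀ K).2 ⟨a * b, map_mul _ _ _⟩

lemma R0_mul_mem {x y : K} (hx : x ∈ R0 K₀ K) (hy : y ∈ R0 K₀ K) : x * y ∈ R0 K₀ K := by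
  obtain ⟨a, rfl⟩ := (mem_R0 K₀ K).1 hx
  obtain ⟨b, rfl⟩ := (mem_R0 K₀ K).1 hy
  exact (mem_R0 K₀ K).2 ⟨a * b, map_mul _ _ _⟩

variable {K₀ K} in
/-- Multiplication by an element of the image of `𝓞 K` preserves `𝔣 • MOK`. -/
lemma mul_smul_mem (𝔣 : Ideal (𝓞 K₀)) {x q : K} (hx : x ∈ MOK K₀ K)
    (hq : q ∈ 𝔣 • MOK K₀ K) : x * q ∈ 𝔣 • MOK K₀ K := by
  refine Submodule.smul_induction_on hq (fun b hb m hm => ?_) (fun p q hp hq => ?_)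
  · have h : x * (b • m) = b • (x * m) := by
      rw [smul_eq, smul_eq]; ring
    rw [h]
    exact Submodule.smul_mem_smul hb (MOK_mul_mem K₀ K hx hm)
  · rw [mul_add]; exact Submodule.add_mem _ hp hq

lemma image_map_eq_smul (𝔣 : Ideal (𝓞 K₀)) {b : 𝓞 K}
    (hb : b ∈ Ideal.map (algebraMap (𝓞 K₀) (𝓞 K)) 𝔣) :
    algebraMap (𝓞 K) K b ∈ 𝔣 • MOK K₀ K := by
  refine Submodule.span_induction ?_ ?_ ?_ ?_ hb
  · rintro x ⟨c, hc, rfl⟩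
    have h : algebraMap (𝓞 K) K (algebraMap (𝓞 K₀) (𝓞 K) c) = c • (1 : K) := by
      rw [algK, smul_eq, mul_one]
    rw [h]
    exact Submodule.smul_mem_smul hc (R0_le_MOK K₀ K (one_mem_R0 K₀ K))
  · simp
  · intro x y _ _ hx hy
    rw [map_add]; exact Submodule.add_mem _ hx hy
  · intro c x _ hx
    have h : algebraMap (𝓞 K) K (c • x) = algebraMap (𝓞 K) K c * algebraMap (𝓞 K) K x := by
      rw [smul_eq_mul, map_mul]
    rw [h]
    exact mul_smul_mem 𝔣 ((mem_MOK K₀ K).2 ⟨c, rfl⟩) hx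

lemma smul_mem_image (𝔣 : Ideal (𝓞 K₀)) {x : K} (hx : x ∈ 𝔣 • MOK K₀ K) :
    ∃ b ∈ Ideal.map (algebraMap (𝓞 K₀) (𝓞 K)) 𝔣, algebraMap (𝓞 K) K b = x := by
  refine Submodule.smul_induction_on hx (fun c hc m hm => ?_) ?_
  · obtain ⟨y, rfl⟩ := (mem_MOK K₀ K).1 hm
    refine ⟨algebraMap (𝓞 K₀) (𝓞 K) c * y,
      Ideal.mul_mem_right _ _ (Ideal.mem_map_of_mem _ hc), ?_⟩
    rw [map_mul, algK, ← smul_eq]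
  · rintro x y ⟨b, hb, rfl⟩ ⟨b', hb', rfl⟩
    exact ⟨b + b', Ideal.add_mem _ hb hb', map_add _ _ _⟩

/-- `ordSet` is the carrier of the submodule `R0 ⊔ 𝔣 • MOK`. -/
lemma ordSet_eq (𝔣 : Ideal (𝓞 K₀)) :
    ordSet K₀ K 𝔣 = ((R0 K₀ K ⊔ 𝔣 • MOK K₀ K : Submodule (𝓞 K₀) K) : Set K) := by
  ext z
  simp only [ordSet, Set.mem_setOf_eq, SetLike.mem_coe, Submodule.mem_sup]
  constructor
  · rintro ⟨a, b, hb, rfl⟩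
    exact ⟨_, (mem_R0 K₀ K).2 ⟨a, (algK₀ K₀ K a).symm⟩, _, image_map_eq_smul K₀ K 𝔣 hb, rfl⟩
  · rintro ⟨p, hp, q, hq, rfl⟩
    obtain ⟨a, rfl⟩ := (mem_R0 K₀ K).1 hp
    obtain ⟨b, hb, rfl⟩ := smul_mem_image K₀ K 𝔣 hq
    exact ⟨a, b, hb, by rw [algK₀]⟩

lemma S_one_mem (𝔣 : Ideal (𝓞 K₀)) : (1 : K) ∈ R0 K₀ K ⊔ 𝔣 • MOK K₀ K :=
  Submodule.mem_sup_left (one_mem_R0 K₀ K)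

lemma S_mul_mem (𝔣 : Ideal (𝓞 K₀)) {x y : K} (hx : x ∈ R0 K₀ K ⊔ 𝔣 • MOK K₀ K)
    (hy : y ∈ R0 K₀ K ⊔ 𝔣 • MOK K₀ K) : x * y ∈ R0 K₀ K ⊔ 𝔣 • MOK K₀ K := by
  rw [Submodule.mem_sup] at hx hy ⊢
  obtain ⟨p, hp, q, hq, rfl⟩ := hx
  obtain ⟨p', hp', q', hq', rfl⟩ := hy
  refine ⟨p * p', R0_mul_mem K₀ K hp hp', p * q' + q * p' + q * q', ?_, by ring⟩
  have h1 : p * q' ∈ 𝔣 • MOK K₀ K := mul_smul_mem 𝔣 (R0_le_MOK K₀ K hp) hq'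
  have h2 : q * p' ∈ 𝔣 • MOK K₀ K := by
    rw [mul_comm]; exact mul_smul_mem 𝔣 (R0_le_MOK K₀ K hp') hq
  have h3 : q * q' ∈ 𝔣 • MOK K₀ K :=
    mul_smul_mem 𝔣 (Submodule.smul_le_right hq) hq'
  exact Submodule.add_mem _ (Submodule.add_mem _ h1 h2) h3

/-- The order attached to an ideal `𝔣`. -/
noncomputable def ordAlg (𝔣 : Ideal (𝓞 K₀)) : Subalgebra ℤ K :=
  (Submodule.restrictScalars ℤ (R0 K₀ K ⊔ 𝔣 • MOK K₀ K)).toSubalgebra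
    (S_one_mem K₀ K 𝔣) (fun _ _ hx hy => S_mul_mem K₀ K 𝔣 hx hy)

lemma ordAlg_coe (𝔣 : Ideal (𝓞 K₀)) :
    (ordAlg K₀ K 𝔣 : Set K) = ((R0 K₀ K ⊔ 𝔣 • MOK K₀ K : Submodule (𝓞 K₀) K) : Set K) := rfl

lemma MOK_restrict_fg : (Submodule.restrictScalars ℤ (MOK K₀ K)).FG := by
  have h : Submodule.restrictScalars ℤ (MOK K₀ K) =
      LinearMap.range ((Algebra.linearMap (𝓞 K) K).restrictScalars ℤ) := by
    ext x
    simp [MOK]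
  rw [h, ← Submodule.map_top]
  exact (IsNoetherian.noetherian ⊤).map _

lemma ordAlg_fg (𝔣 : Ideal (𝓞 K₀)) : (Subalgebra.toSubmodule (ordAlg K₀ K 𝔣)).FG := by
  have h : Subalgebra.toSubmodule (ordAlg K₀ K 𝔣) =
      Submodule.restrictScalars ℤ (R0 K₀ K ⊔ 𝔣 • MOK K₀ K) :=
    Submodule.toSubalgebra_toSubmodule _ _ _
  rw [h]
  refine fg_of_le (MOK_restrict_fg K₀ K) ?_
  intro x hx
  exact (sup_le (R0_le_MOK K₀ K) (Submodule.smul_le_right)) hx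

lemma spanQ_MOK : Submodule.span ℚ ((MOK K₀ K : Set K)) = ⊤ := by
  rw [eq_top_iff, ← (integralBasis K).span_eq]
  refine Submodule.span_mono ?_
  rintro x ⟨i, rfl⟩
  rw [integralBasis_apply]
  exact (mem_MOK K₀ K).2 ⟨_, rfl⟩

lemma ordAlg_span (𝔣 : Ideal (𝓞 K₀)) (h𝔣 : 𝔣 ≠ ⊥) :
    Submodule.span ℚ ((ordAlg K₀ K 𝔣 : Set K)) = ⊤ := by
  obtain ⟨c, hc, hc0⟩ := Submodule.exists_mem_ne_zero_of_ne_bot h𝔣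
  have hcK : algebraMap (𝓞 K₀) K c ≠ 0 := by
    intro h
    exact hc0 ((FaithfulSMul.algebraMap_injective (𝓞 K₀) K) (by simpa using h))
  set L : K →ₗ[ℚ] K := LinearMap.mulLeft ℚ (algebraMap (𝓞 K₀) K c) with hL
  have hsurj : Function.Surjective L := by
    intro z
    refine ⟨(algebraMap (𝓞 K₀) K c)⁻¹ * z, ?_⟩
    rw [hL, LinearMap.mulLeft_apply, ← mul_assoc, mul_inv_cancel₀ hcK, one_mul]
  rw [eq_top_iff]
  calc (⊤ : Submodule ℚ K) = Submodule.map L ⊤ := by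
        rw [Submodule.map_top, LinearMap.range_eq_top.2 hsurj]
    _ = Submodule.map L (Submodule.span ℚ (MOK K₀ K : Set K)) := by rw [spanQ_MOK]
    _ = Submodule.span ℚ (L '' (MOK K₀ K : Set K)) := Submodule.map_span L _
    _ ≤ Submodule.span ℚ ((ordAlg K₀ K 𝔣 : Set K)) := by
        refine Submodule.span_mono ?_
        rintro y ⟨x, hx, rfl⟩
        rw [ordAlg_coe]
        have h : L x = c • x := by rw [hL, LinearMap.mulLeft_apply, smul_eq]
        rw [h]
        exact Submodule.mem_sup_right (Submodule.smul_mem_smul hc hx)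

/-- If a subset of the image of `K₀` spans `K` over `ℚ`, then the extension is trivial. -/
lemma no_span_in_base (h2 : Module.finrank K₀ K = 2) (s : Set K)
    (hs : s ⊆ Set.range (algebraMap K₀ K)) (htop : Submodule.span ℚ s = ⊤) : False := by
  have hW : Submodule.span ℚ s ≤
      Submodule.restrictScalars ℚ (Subalgebra.toSubmodule (⊥ : Subalgebra K₀ K)) := by
    rw [Submodule.span_le]
    intro x hx
    have h := hs hx
    simpa [Algebra.mem_bot] using h
  have hb : (⊥ : Subalgebra K₀ K) = ⊤ := by
    ext x
    simp only [Algebra.mem_top, iff_true]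
    have hx : x ∈ Submodule.span ℚ s := by rw [htop]; exact Submodule.mem_top
    exact hW hx
  have h1 := Subalgebra.bot_eq_top_iff_finrank_eq_one.mp hb
  rw [h2] at h1
  exact absurd h1 (by norm_num)

lemma exists_nonreal (h2 : Module.finrank K₀ K = 2) :
    ∃ z : 𝓞 K, algebraMap (𝓞 K) K z ∉ Set.range (algebraMap K₀ K) := by
  by_contra h
  push_neg at h
  refine no_span_in_base K₀ K h2 (MOK K₀ K : Set K) ?_ (spanQ_MOK K₀ K)
  intro x hx
  obtain ⟨y, rfl⟩ := (mem_MOK K₀ K).1 hx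
  exact h y

variable {K₀ K} in
lemma mem_R0_of {x : K} (hx : x ∈ MOK K₀ K) (hr : x ∈ Set.range (algebraMap K₀ K)) :
    x ∈ R0 K₀ K := by
  obtain ⟨a, rfl⟩ := hr
  obtain ⟨w, hw⟩ := (mem_MOK K₀ K).1 hx
  have hint : IsIntegral ℤ (algebraMap K₀ K a) := by
    rw [← hw]; exact RingOfIntegers.isIntegral_coe w
  have ha : IsIntegral ℤ a :=
    (isIntegral_algebraMap_iff (FaithfulSMul.algebraMap_injective K₀ K)).mp hint
  exact (mem_R0 K₀ K).2 ⟨⟨a, ha⟩, (algK₀ K₀ K ⟨a, ha⟩).symm⟩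

variable {K₀ K} in
lemma part2 (h2 : Module.finrank K₀ K = 2) (O : Subalgebra ℤ K)
    (hFG : (Subalgebra.toSubmodule O).FG) (hspan : Submodule.span ℚ (O : Set K) = ⊤)
    (hsub : realIntegers K₀ K ⊆ (O : Set K)) :
    ∃! 𝔣₀ : Ideal (𝓞 K₀), 𝔣₀ ≠ ⊥ ∧ (O : Set K) = ordSet K₀ K 𝔣₀ := by
  classical
  -- a nonreal integral element
  obtain ⟨z', hznr⟩ := exists_nonreal K₀ K h2
  set z : K := algebraMap (𝓞 K) K z' with hzdef
  have hzMOK : z ∈ MOK K₀ K := (mem_MOK K₀ K).2 ⟨z', rfl⟩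
  have hz0 : z ≠ 0 := by
    intro h; exact hznr (h ▸ ⟨0, by simp⟩)
  -- the basis {1, z}
  have hli : LinearIndependent K₀ ![(1 : K), z] := by
    rw [linearIndependent_fin2]
    refine ⟨by simpa using hz0, fun a ha => ?_⟩
    apply hznr
    have h1 : algebraMap K₀ K a * z = 1 := by
      rw [← Algebra.smul_def]; simpa using ha
    refine ⟨a⁻¹, ?_⟩
    rw [map_inv₀]
    exact (eq_inv_of_mul_eq_one_left (by rwa [mul_comm] at h1)).symm
  have hcard : Fintype.card (Fin 2) = Module.finrank K₀ K := by simp [h2]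
  set bas := basisOfLinearIndependentOfCardEqFinrank hli hcard with hbasdef
  have hbas : ⇑bas = ![(1 : K), z] := coe_basisOfLinearIndependentOfCardEqFinrank hli hcard
  have hbas0 : bas 0 = 1 := by rw [hbas]; simp
  have hbas1 : bas 1 = z := by rw [hbas]; simp
  set φ : K →ₗ[K₀] K₀ := bas.coord 1 with hφdef
  have hφz : φ z = 1 := by
    rw [← hbas1, hφdef, Module.Basis.coord_apply, Module.Basis.repr_self]
    simp
  have hφalg : ∀ a : K₀, φ (algebraMap K₀ K a) = 0 := by
    intro a
    have h1 : algebraMap K₀ K a = a • bas 0 := by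
      rw [hbas0, Algebra.algebraMap_eq_smul_one]
    rw [h1, map_smul, hφdef, Module.Basis.coord_apply, Module.Basis.repr_self]
    simp
  have hφ0 : ∀ x : K, φ x = 0 → x ∈ Set.range (algebraMap K₀ K) := by
    intro x hx
    have h1 : (bas.repr x) 1 = 0 := hx
    have hrep := bas.sum_repr x
    rw [Fin.sum_univ_two, h1, zero_smul, add_zero, hbas0] at hrep
    exact ⟨bas.repr x 0, (Algebra.algebraMap_eq_smul_one _).trans hrep⟩
  set φ' : K →ₗ[𝓞 K₀] K₀ := LinearMap.restrictScalars (𝓞 K₀) φ with hφ'def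
  -- `O` as an `𝓞 K₀`-submodule of `K`
  set MO : Submodule (𝓞 K₀) K :=
    { carrier := (O : Set K)
      add_mem' := fun ha hb => O.add_mem ha hb
      zero_mem' := O.zero_mem
      smul_mem' := by
        intro c x hx
        have hc : algebraMap (𝓞 K₀) K c ∈ (O : Set K) := hsub ⟨c, algK₀ K₀ K c⟩
        rw [smul_eq]
        exact O.mul_mem hc hx } with hMOdef
  have hMOset : (MO : Set K) = (O : Set K) := rfl
  have hR0MO : R0 K₀ K ≤ MO := by
    intro x hx
    exact hsub (by rw [realIntegers_eq]; exact hx)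
  have hMOle : MO ≤ MOK K₀ K := by
    intro x hx
    have hint : IsIntegral ℤ x := IsIntegral.of_mem_of_fg O hFG x hx
    exact (mem_MOK K₀ K).2 ⟨⟨x, hint⟩, rfl⟩
  -- the fractional ideals `𝔞 = φ(𝓞 K)` and `𝔠 = φ(O)`
  set 𝔞 : Submodule (𝓞 K₀) K₀ := Submodule.map φ' (MOK K₀ K) with h𝔞def
  set 𝔠 : Submodule (𝓞 K₀) K₀ := Submodule.map φ' MO with h𝔠def
  have hMOKfg : (MOK K₀ K).FG := by
    have h : MOK K₀ K =
        Submodule.map ((Algebra.linearMap (𝓞 K) K).restrictScalars (𝓞 K₀)) ⊤ := by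
      rw [Submodule.map_top]; rfl
    rw [h]
    exact (IsNoetherian.noetherian ⊤).map _
  have hMOfg : MO.FG := by
    obtain ⟨s, hs⟩ := hFG
    refine ⟨s, le_antisymm ?_ ?_⟩
    · rw [Submodule.span_le]
      intro x hx
      have hx2 : x ∈ Subalgebra.toSubmodule O := by
        rw [← hs]; exact Submodule.subset_span hx
      exact hx2
    · intro x hx
      have hx' : x ∈ Submodule.span ℤ (s : Set K) := by
        rw [hs]; exact hx
      exact Submodule.span_subset_span ℤ (𝓞 K₀) _ hx'
  have h𝔞fg : 𝔞.FG := hMOKfg.map _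
  have h𝔠fg : 𝔠.FG := hMOfg.map _
  set 𝔞f : FractionalIdeal (nonZeroDivisors (𝓞 K₀)) K₀ :=
    ⟨𝔞, FractionalIdeal.isFractional_of_fg h𝔞fg⟩ with h𝔞fdef
  set 𝔠f : FractionalIdeal (nonZeroDivisors (𝓞 K₀)) K₀ :=
    ⟨𝔠, FractionalIdeal.isFractional_of_fg h𝔠fg⟩ with h𝔠fdef
  have h𝔞fcoe : (𝔞f : Submodule (𝓞 K₀) K₀) = 𝔞 := rfl
  have h𝔠fcoe : (𝔠f : Submodule (𝓞 K₀) K₀) = 𝔠 := rfl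
  have h1𝔞 : (1 : K₀) ∈ 𝔞 := by
    rw [h𝔞def]
    exact ⟨z, hzMOK, hφz⟩
  have h𝔞0 : 𝔞f ≠ 0 := by
    intro h
    have h1 : (1 : K₀) ∈ 𝔞f := h1𝔞
    rw [h] at h1
    simpa using h1
  have hcle : 𝔠f ≤ 𝔞f := by
    intro x hx
    exact Submodule.map_mono hMOle hx
  obtain ⟨𝔟, h𝔟⟩ : ∃ I : Ideal (𝓞 K₀),
      (I : FractionalIdeal (nonZeroDivisors (𝓞 K₀)) K₀) = 𝔠f * 𝔞f⁻¹ := by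
    refine FractionalIdeal.le_one_iff_exists_coeIdeal.mp ?_
    calc 𝔠f * 𝔞f⁻¹ ≤ 𝔞f * 𝔞f⁻¹ := mul_le_mul_left hcle _
      _ = 1 := mul_inv_cancel₀ h𝔞0
  have hkey : (𝔟 : FractionalIdeal (nonZeroDivisors (𝓞 K₀)) K₀) * 𝔞f = 𝔠f := by
    rw [h𝔟, mul_assoc, inv_mul_cancel₀ h𝔞0, mul_one]
  have hcoeS : ∀ I : Ideal (𝓞 K₀),
      (((I : FractionalIdeal (nonZeroDivisors (𝓞 K₀)) K₀) * 𝔞f :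
        FractionalIdeal (nonZeroDivisors (𝓞 K₀)) K₀) : Submodule (𝓞 K₀) K₀) = I • 𝔞 := by
    intro I
    rw [FractionalIdeal.coe_mul, FractionalIdeal.coe_coeIdeal, h𝔞fcoe]
    have h : IsLocalization.coeSubmodule K₀ I =
        Submodule.map (Algebra.linearMap (𝓞 K₀) K₀) I := rfl
    rw [h, map_mul_eq_smul]
  have hsmul𝔟 : 𝔟 • 𝔞 = 𝔠 := by
    have h := congrArg (fun J : FractionalIdeal (nonZeroDivisors (𝓞 K₀)) K₀ =>
      (J : Submodule (𝓞 K₀) K₀)) hkey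
    simp only [h𝔠fcoe] at h
    rwa [hcoeS 𝔟] at h
  have hmapsmul : ∀ I : Ideal (𝓞 K₀), Submodule.map φ' (I • MOK K₀ K) = I • 𝔞 := by
    intro I
    rw [h𝔞def]
    exact Submodule.map_smul'' I (MOK K₀ K) φ'
  -- key inclusion: `I • 𝓞 K ⊆ O` whenever `I • 𝔞 ≤ 𝔠`
  have hclaimA : ∀ I : Ideal (𝓞 K₀), I • 𝔞 ≤ 𝔠 → I • MOK K₀ K ≤ MO := by
    intro I hI
    rw [Submodule.smul_le]
    intro b hb x hx
    have h1 : φ' (b • x) ∈ 𝔠 := by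
      rw [map_smul]
      exact hI (Submodule.smul_mem_smul hb (Submodule.mem_map_of_mem hx))
    rw [h𝔠def] at h1
    obtain ⟨y, hy, hyx⟩ := Submodule.mem_map.mp h1
    have hd : φ (b • x - y) = 0 := by
      rw [map_sub, show φ y = φ (b • x) from hyx, sub_self]
    have hdMOK : b • x - y ∈ MOK K₀ K :=
      Submodule.sub_mem _ (Submodule.smul_mem _ b hx) (hMOle hy)
    have hdR0 : b • x - y ∈ R0 K₀ K := mem_R0_of hdMOK (hφ0 _ hd)
    have h2' : b • x = (b • x - y) + y := by ring
    rw [h2']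
    exact MO.add_mem (hR0MO hdR0) hy
  -- reverse inclusion
  have hclaimB : MO ≤ R0 K₀ K ⊔ 𝔟 • MOK K₀ K := by
    intro w hw
    have h1 : φ' w ∈ Submodule.map φ' (𝔟 • MOK K₀ K) := by
      rw [hmapsmul 𝔟, hsmul𝔟, h𝔠def]
      exact Submodule.mem_map_of_mem hw
    obtain ⟨v, hv, hvw⟩ := Submodule.mem_map.mp h1
    have hd : φ (w - v) = 0 := by
      rw [map_sub, show φ v = φ w from hvw, sub_self]
    have hdMOK : w - v ∈ MOK K₀ K :=
      Submodule.sub_mem _ (hMOle hw) (Submodule.smul_le_right hv)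
    have hdR0 : w - v ∈ R0 K₀ K := mem_R0_of hdMOK (hφ0 _ hd)
    have h2' : w = (w - v) + v := by ring
    rw [h2']
    exact Submodule.add_mem _ (Submodule.mem_sup_left hdR0) (Submodule.mem_sup_right hv)
  have h𝔠0 : 𝔠 ≠ ⊥ := by
    intro hbot
    refine no_span_in_base K₀ K h2 (O : Set K) ?_ hspan
    intro x hx
    refine hφ0 x ?_
    have h1 : φ' x ∈ 𝔠 := by
      rw [h𝔠def]
      exact Submodule.mem_map_of_mem hx
    rw [hbot] at h1
    exact (Submodule.mem_bot _).1 h1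
  have h𝔟0 : 𝔟 ≠ ⊥ := by
    rintro rfl
    exact h𝔠0 (by rw [← hsmul𝔟, Submodule.bot_smul])
  have hMOeq : MO = R0 K₀ K ⊔ 𝔟 • MOK K₀ K :=
    le_antisymm hclaimB (sup_le hR0MO (hclaimA 𝔟 (le_of_eq hsmul𝔟)))
  refine ⟨𝔟, ⟨h𝔟0, ?_⟩, ?_⟩
  · rw [ordSet_eq, ← hMOset, hMOeq]
  · rintro 𝔣 ⟨h𝔣0, h𝔣eq⟩
    have hMOeq' : MO = R0 K₀ K ⊔ 𝔣 • MOK K₀ K := by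
      apply SetLike.ext'
      rw [hMOset, h𝔣eq, ordSet_eq]
    have hmapR0 : Submodule.map φ' (R0 K₀ K) = ⊥ := by
      rw [eq_bot_iff]
      rintro x ⟨y, hy, rfl⟩
      obtain ⟨a, rfl⟩ := (mem_R0 K₀ K).1 hy
      have h : φ' (algebraMap (𝓞 K₀) K a) = 0 := by
        rw [← algK₀ K₀ K a]
        exact hφalg _
      simp [h]
    have h1 : 𝔣 • 𝔞 = 𝔠 := by
      have h := congrArg (Submodule.map φ') hMOeq'
      rw [Submodule.map_sup, hmapR0, hmapsmul 𝔣, bot_sup_eq, ← h𝔠def] at h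
      exact h.symm
    have h2f : (𝔣 : FractionalIdeal (nonZeroDivisors (𝓞 K₀)) K₀) * 𝔞f = 𝔠f := by
      refine FractionalIdeal.coeToSubmodule_injective ?_
      show (((𝔣 : FractionalIdeal (nonZeroDivisors (𝓞 K₀)) K₀) * 𝔞f :
        FractionalIdeal (nonZeroDivisors (𝓞 K₀)) K₀) : Submodule (𝓞 K₀) K₀) =
        ((𝔠f : FractionalIdeal (nonZeroDivisors (𝓞 K₀)) K₀) : Submodule (𝓞 K₀) K₀)
      rw [hcoeS 𝔣, h𝔠fcoe]
      exact h1
    have h3 : (𝔣 : FractionalIdeal (nonZeroDivisors (𝓞 K₀)) K₀) =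
        (𝔟 : FractionalIdeal (nonZeroDivisors (𝓞 K₀)) K₀) :=
      mul_right_cancel₀ h𝔞0 (h2f.trans hkey.symm)
    exact FractionalIdeal.coeIdeal_injective h3


end OMB

/-- Let `K / K₀` be a quadratic extension of number fields.  The map `𝔣₀ ↦ 𝓞 K₀ + 𝔣₀ 𝓞 K`
is a bijection between the set of nonzero ideals of `𝓞 K₀` and the set of orders of `K`
containing `𝓞 K₀`: every such set is an order containing `𝓞 K₀`, and every order of `K`
containing `𝓞 K₀` arises from exactly one nonzero ideal `𝔣₀`. -/
theorem orders_maxRM_bijection (K₀ K : Type*) [Field K₀] [NumberField K₀]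
    [Field K] [NumberField K] [Algebra K₀ K] (h2 : Module.finrank K₀ K = 2) :
    (∀ 𝔣₀ : Ideal (𝓞 K₀), 𝔣₀ ≠ ⊥ →
      ∃ O : Subalgebra ℤ K, (O : Set K) = ordSet K₀ K 𝔣₀ ∧ IsOrder K O ∧
        realIntegers K₀ K ⊆ (O : Set K)) ∧
    (∀ O : Subalgebra ℤ K, IsOrder K O → realIntegers K₀ K ⊆ (O : Set K) →
      ∃! 𝔣₀ : Ideal (𝓞 K₀), 𝔣₀ ≠ ⊥ ∧ (O : Set K) = ordSet K₀ K 𝔣₀) := by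
  constructor
  · intro 𝔣₀ h𝔣
    refine ⟨OMB.ordAlg K₀ K 𝔣₀, ?_, ⟨OMB.ordAlg_fg K₀ K 𝔣₀, OMB.ordAlg_span K₀ K 𝔣₀ h𝔣⟩, ?_⟩
    · rw [OMB.ordAlg_coe, OMB.ordSet_eq]
    · rw [OMB.realIntegers_eq, OMB.ordAlg_coe]
      exact fun x hx => Submodule.mem_sup_left hx
  · intro O hO hsub
    obtain ⟨hFG, hspan⟩ := hO
    exact OMB.part2 h2 O hFG hspan hsub
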